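/- Let C = ln(1+√2)/π. The minimum value H* of the Ising Hamiltonian H(S) on the Chimera graph G_r satisfies ((C+2)/C)·H* ≤ −(A_0 + A_1 + A_01), where A_0 = Σ_{(u,v)∈E_0}|c_{uv}|, A_1 = Σ_{(u,v)∈E_1}|c_{uv}|, and A_01 = Σ_{(u,v)∈E_01}|c_{uv}|. -/

import Mathlib

open Finset

abbrev ChimeraVertex (r : ℕ) := Fin r × Fin r × Fin 4 × Fin 2

def lowRow {r : ℕ} (i : Fin (r - 1)) : Fin r := ⟨i.val, by have := i.isLt; omega⟩

def highRow {r : ℕ} (i : Fin (r - 1)) : Fin r := ⟨i.val + 1, by have := i.isLt; omega⟩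

/-- `S` is a valid spin assignment, i.e. takes values in `{-1, 1}`. -/
def IsPM {r : ℕ} (S : ChimeraVertex r → ℝ) : Prop := ∀ v, S v = 1 ∨ S v = -1

/-- The Ising Hamiltonian on the Chimera graph `G_r`. -/
def IsingH {r : ℕ} (c0 : Fin (r - 1) → Fin r → Fin 4 → ℝ)
    (c1 : Fin r → Fin (r - 1) → Fin 4 → ℝ)
    (c01 : Fin r → Fin r → Fin 4 → Fin 4 → ℝ)
    (d : ChimeraVertex r → ℝ) (S : ChimeraVertex r → ℝ) : ℝ :=
  (∑ i, ∑ j, ∑ k, c0 i j k * (S (lowRow i, j, k, 0) * S (highRow i, j, k, 0)))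
    + (∑ i, ∑ j, ∑ k, c1 i j k * (S (i, lowRow j, k, 1) * S (i, highRow j, k, 1)))
    + (∑ i, ∑ j, ∑ k0, ∑ k1, c01 i j k0 k1 * (S (i, j, k0, 0) * S (i, j, k1, 1)))
    + (∑ v, d v * S v)




noncomputable def sg (x : ℝ) : ℝ := if 0 ≤ x then -1 else 1

lemma sg_pm (x : ℝ) : sg x = 1 ∨ sg x = -1 := by unfold sg; split_ifs <;> simp

lemma mul_sg (x : ℝ) : x * sg x = -|x| := by
  unfold sg; split_ifs with h
  · rw [abs_of_nonneg h]; ring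
  · rw [abs_of_neg (lt_of_not_ge h)]; ring

noncomputable def pce (b : Bool) : ℝ := if b then 1 else -1

lemma pce_pm (b : Bool) : pce b = 1 ∨ pce b = -1 := by cases b <;> simp [pce]

lemma pce_not (b : Bool) : pce (!b) = - pce b := by cases b <;> simp [pce]

lemma pm_mul_self {x : ℝ} (h : x = 1 ∨ x = -1) : x * x = 1 := by
  rcases h with h | h <;> rw [h] <;> norm_num

lemma sum_pce_mul {N : Type*} [Fintype N] [DecidableEq N] (u : N) (F : (N → Bool) → ℝ)
    (hF : ∀ τ, F (Function.update τ u (!(τ u))) = F τ) :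
    ∑ τ : N → Bool, pce (τ u) * F τ = 0 := by
  have hinv : Function.Involutive (fun τ : N → Bool => Function.update τ u (!(τ u))) := by
    intro τ; funext x
    by_cases hx : x = u
    · subst hx; simp
    · simp [Function.update_of_ne hx]
  have h1 : ∑ τ : N → Bool, pce (τ u) * F τ
      = ∑ τ : N → Bool,
          pce ((Function.update τ u (!(τ u))) u) * F (Function.update τ u (!(τ u))) := by
    exact (Equiv.sum_comp hinv.toPerm (fun τ => pce (τ u) * F τ)).symm
  have h2 : ∀ τ : N → Bool,
      pce ((Function.update τ u (!(τ u))) u) * F (Function.update τ u (!(τ u)))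
        = -(pce (τ u) * F τ) := by
    intro τ
    rw [hF, Function.update_self, pce_not]; ring
  rw [Finset.sum_congr rfl (fun τ _ => h2 τ)] at h1
  rw [Finset.sum_neg_distrib] at h1
  linarith

lemma sum_pce_two {N : Type*} [Fintype N] [DecidableEq N] {u v : N} (h : u ≠ v) :
    ∑ τ : N → Bool, pce (τ u) * pce (τ v) = 0 :=
  sum_pce_mul u (fun τ => pce (τ v)) (fun τ => by beta_reduce; rw [Function.update_of_ne (Ne.symm h)])

lemma sum_pce_one {N : Type*} [Fintype N] [DecidableEq N] (u : N) :
    ∑ τ : N → Bool, pce (τ u) = 0 := by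
  have := sum_pce_mul u (fun _ => 1) (fun τ => rfl)
  simpa using this

lemma sum_const_mul_pce {N : Type*} [Fintype N] [DecidableEq N] (K : ℝ) (u : N) :
    ∑ τ : N → Bool, K * pce (τ u) = 0 := by
  rw [← Finset.mul_sum, sum_pce_one, mul_zero]

lemma sum_const_mul_pce_two {N : Type*} [Fintype N] [DecidableEq N] (K : ℝ) {u v : N}
    (h : u ≠ v) :
    ∑ τ : N → Bool, K * (pce (τ u) * pce (τ v)) = 0 := by
  rw [← Finset.mul_sum, sum_pce_two h, mul_zero]

noncomputable def chain (f : ℕ → ℝ) : ℕ → ℝ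
  | 0 => 1
  | n + 1 => sg (f n) * chain f n

lemma chain_pm (f : ℕ → ℝ) (n : ℕ) : chain f n = 1 ∨ chain f n = -1 := by
  induction n with
  | zero => left; rfl
  | succ n ih =>
      rcases sg_pm (f n) with h | h <;> rcases ih with h' | h' <;>
        simp [chain, h, h']

lemma chain_succ (f : ℕ → ℝ) (n : ℕ) : chain f (n + 1) = sg (f n) * chain f n := rfl

lemma sum_comm_nest3 {M I J K : Type*} [Fintype M] [Fintype I] [Fintype J] [Fintype K]
    (G : M → I → J → K → ℝ) :
    ∑ m : M, ∑ i : I, ∑ j : J, ∑ k : K, G m i j k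
      = ∑ i : I, ∑ j : J, ∑ k : K, ∑ m : M, G m i j k := by
  rw [Finset.sum_comm]
  refine Finset.sum_congr rfl fun i _ => ?_
  rw [Finset.sum_comm]
  refine Finset.sum_congr rfl fun j _ => ?_
  rw [Finset.sum_comm]

lemma sum_comm_nest4 {M I J K L : Type*} [Fintype M] [Fintype I] [Fintype J] [Fintype K]
    [Fintype L] (G : M → I → J → K → L → ℝ) :
    ∑ m : M, ∑ i : I, ∑ j : J, ∑ k : K, ∑ l : L, G m i j k l
      = ∑ i : I, ∑ j : J, ∑ k : K, ∑ l : L, ∑ m : M, G m i j k l := by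
  rw [Finset.sum_comm]
  refine Finset.sum_congr rfl fun i _ => ?_
  exact sum_comm_nest3 (fun m j k l => G m i j k l)

section Families

variable {r : ℕ} (c0 : Fin (r - 1) → Fin r → Fin 4 → ℝ)
    (c1 : Fin r → Fin (r - 1) → Fin 4 → ℝ)
    (c01 : Fin r → Fin r → Fin 4 → Fin 4 → ℝ)

/-- The edge part of the Hamiltonian. -/
def EdgeE (S : ChimeraVertex r → ℝ) : ℝ :=
  (∑ i, ∑ j, ∑ k, c0 i j k * (S (lowRow i, j, k, 0) * S (highRow i, j, k, 0)))
    + (∑ i, ∑ j, ∑ k, c1 i j k * (S (i, lowRow j, k, 1) * S (i, highRow j, k, 1)))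
    + (∑ i, ∑ j, ∑ k0, ∑ k1, c01 i j k0 k1 * (S (i, j, k0, 0) * S (i, j, k1, 1)))

lemma isingH_eq (d S) : IsingH c0 c1 c01 d S = EdgeE c0 c1 c01 S + ∑ v, d v * S v := rfl

lemma isingH_neg (d S) :
    IsingH c0 c1 c01 d (fun v => -(S v)) = EdgeE c0 c1 c01 S - ∑ v, d v * S v := by
  unfold IsingH EdgeE
  simp only [mul_neg, neg_mul, neg_neg, Finset.sum_neg_distrib]
  ring

lemma isPM_neg {S : ChimeraVertex r → ℝ} (h : IsPM S) : IsPM (fun v => -(S v)) := by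
  intro v; rcases h v with h' | h' <;> simp [h']

lemma lowRow_val (i : Fin (r - 1)) : (lowRow i).val = i.val := rfl
lemma highRow_val (i : Fin (r - 1)) : (highRow i).val = i.val + 1 := rfl
lemma low_ne_high (j : Fin (r - 1)) : lowRow j ≠ highRow j := by
  simp only [Ne, Fin.ext_iff, lowRow_val, highRow_val]
  omega

end Families

section Families2

variable {r : ℕ} (c0 : Fin (r - 1) → Fin r → Fin 4 → ℝ)
    (c1 : Fin r → Fin (r - 1) → Fin 4 → ℝ)
    (c01 : Fin r → Fin r → Fin 4 → Fin 4 → ℝ)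
    (d : ChimeraVertex r → ℝ) (Sopt : ChimeraVertex r → ℝ)

lemma min_le_edge
    (hmin : ∀ S : ChimeraVertex r → ℝ, IsPM S →
      IsingH c0 c1 c01 d Sopt ≤ IsingH c0 c1 c01 d S)
    {S : ChimeraVertex r → ℝ} (hS : IsPM S) :
    IsingH c0 c1 c01 d Sopt ≤ EdgeE c0 c1 c01 S := by
  have h1 := hmin S hS
  have h2 := hmin (fun v => -(S v)) (isPM_neg hS)
  rw [isingH_eq c0 c1 c01 d S] at h1
  rw [isingH_neg c0 c1 c01 d S] at h2
  linarith

lemma min_le_of_family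
    (hmin : ∀ S : ChimeraVertex r → ℝ, IsPM S →
      IsingH c0 c1 c01 d Sopt ≤ IsingH c0 c1 c01 d S)
    {N : Type} [Fintype N] [DecidableEq N]
    (S : (N → Bool) → ChimeraVertex r → ℝ) (hPM : ∀ τ, IsPM (S τ)) (B : ℝ)
    (havg : ∑ τ : N → Bool, EdgeE c0 c1 c01 (S τ) = ∑ _τ : N → Bool, B) :
    IsingH c0 c1 c01 d Sopt ≤ B := by
  obtain ⟨τ, -, hτ⟩ := Finset.exists_le_of_sum_le Finset.univ_nonempty havg.le
  exact (min_le_edge c0 c1 c01 d Sopt hmin (hPM τ)).trans hτ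

/-- chain of signs along rows, for column j, spin k -/
noncomputable def g0 (j : Fin r) (k : Fin 4) : ℕ → ℝ :=
  chain (fun n => if h : n < r - 1 then c0 ⟨n, h⟩ j k else 0)

lemma g0_pm (j : Fin r) (k : Fin 4) (n : ℕ) : g0 c0 j k n = 1 ∨ g0 c0 j k n = -1 :=
  chain_pm _ n

lemma g0_sq (j : Fin r) (k : Fin 4) (n : ℕ) : g0 c0 j k n * g0 c0 j k n = 1 :=
  pm_mul_self (g0_pm c0 j k n)

lemma g0_succ (i : Fin (r - 1)) (j : Fin r) (k : Fin 4) :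
    g0 c0 j k (i.val + 1) = sg (c0 i j k) * g0 c0 j k i.val := by
  unfold g0
  rw [chain_succ]
  rw [dif_pos i.isLt]

lemma e0term (i : Fin (r - 1)) (j : Fin r) (k : Fin 4) :
    c0 i j k * (g0 c0 j k i.val * g0 c0 j k (i.val + 1)) = -|c0 i j k| := by
  rw [g0_succ]
  calc c0 i j k * (g0 c0 j k i.val * (sg (c0 i j k) * g0 c0 j k i.val))
      = (c0 i j k * sg (c0 i j k)) * (g0 c0 j k i.val * g0 c0 j k i.val) := by ring
    _ = -|c0 i j k| := by rw [g0_sq, mul_one, mul_sg]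

/-- family 0: deterministic on layer 0, random on layer 1 -/
noncomputable def fam0 (τ : Fin r × Fin r × Fin 4 → Bool) : ChimeraVertex r → ℝ :=
  fun v => if v.2.2.2 = (0 : Fin 2) then g0 c0 v.2.1 v.2.2.1 v.1.val
           else pce (τ (v.1, v.2.1, v.2.2.1))

lemma fam0_pm (τ) : IsPM (fam0 c0 τ) := by
  intro v
  unfold fam0
  split_ifs
  · exact g0_pm c0 _ _ _
  · exact pce_pm _

lemma fam0_eval0 (τ) (i : Fin r) (j : Fin r) (k : Fin 4) :
    fam0 c0 τ (i, j, k, 0) = g0 c0 j k i.val := by simp [fam0]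

lemma fam0_eval1 (τ) (i : Fin r) (j : Fin r) (k : Fin 4) :
    fam0 c0 τ (i, j, k, 1) = pce (τ (i, j, k)) := by simp [fam0]

lemma fam0_avg :
    ∑ τ : Fin r × Fin r × Fin 4 → Bool, EdgeE c0 c1 c01 (fam0 c0 τ)
      = ∑ _τ : Fin r × Fin r × Fin 4 → Bool, -(∑ i, ∑ j, ∑ k, |c0 i j k|) := by
  have expand : ∀ τ : Fin r × Fin r × Fin 4 → Bool, EdgeE c0 c1 c01 (fam0 c0 τ) =
      (∑ i, ∑ j, ∑ k, -|c0 i j k|)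
      + (∑ i : Fin r, ∑ j : Fin (r - 1), ∑ k : Fin 4,
          c1 i j k * (pce (τ (i, lowRow j, k)) * pce (τ (i, highRow j, k))))
      + (∑ i : Fin r, ∑ j : Fin r, ∑ k0 : Fin 4, ∑ k1 : Fin 4,
          c01 i j k0 k1 * (g0 c0 j k0 i.val * pce (τ (i, j, k1)))) := by
    intro τ
    unfold EdgeE
    simp only [fam0_eval0, fam0_eval1, lowRow_val, highRow_val, e0term]
  simp only [expand]
  rw [Finset.sum_add_distrib, Finset.sum_add_distrib]
  have hB : ∑ τ : Fin r × Fin r × Fin 4 → Bool,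
      ∑ i : Fin r, ∑ j : Fin (r - 1), ∑ k : Fin 4,
        c1 i j k * (pce (τ (i, lowRow j, k)) * pce (τ (i, highRow j, k))) = 0 := by
    rw [sum_comm_nest3]
    refine Finset.sum_eq_zero fun i _ => Finset.sum_eq_zero fun j _ =>
      Finset.sum_eq_zero fun k _ => ?_
    refine sum_const_mul_pce_two _ ?_
    intro h
    exact low_ne_high j (congrArg (fun p => p.2.1) h)
  have hC : ∑ τ : Fin r × Fin r × Fin 4 → Bool,
      ∑ i : Fin r, ∑ j : Fin r, ∑ k0 : Fin 4, ∑ k1 : Fin 4,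
        c01 i j k0 k1 * (g0 c0 j k0 i.val * pce (τ (i, j, k1))) = 0 := by
    rw [sum_comm_nest4]
    refine Finset.sum_eq_zero fun i _ => Finset.sum_eq_zero fun j _ =>
      Finset.sum_eq_zero fun k0 _ => Finset.sum_eq_zero fun k1 _ => ?_
    have h1 : ∀ τ : Fin r × Fin r × Fin 4 → Bool,
        c01 i j k0 k1 * (g0 c0 j k0 i.val * pce (τ (i, j, k1)))
          = (c01 i j k0 k1 * g0 c0 j k0 i.val) * pce (τ (i, j, k1)) := fun τ => by ring
    rw [Finset.sum_congr rfl fun τ _ => h1 τ]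
    exact sum_const_mul_pce _ _
  rw [hB, hC]
  simp [Finset.sum_neg_distrib]

end Families2

section Families3

variable {r : ℕ} (c0 : Fin (r - 1) → Fin r → Fin 4 → ℝ)
    (c1 : Fin r → Fin (r - 1) → Fin 4 → ℝ)
    (c01 : Fin r → Fin r → Fin 4 → Fin 4 → ℝ)

noncomputable def g1 (i : Fin r) (k : Fin 4) : ℕ → ℝ :=
  chain (fun n => if h : n < r - 1 then c1 i ⟨n, h⟩ k else 0)

lemma g1_pm (i : Fin r) (k : Fin 4) (n : ℕ) : g1 c1 i k n = 1 ∨ g1 c1 i k n = -1 :=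
  chain_pm _ n

lemma g1_sq (i : Fin r) (k : Fin 4) (n : ℕ) : g1 c1 i k n * g1 c1 i k n = 1 :=
  pm_mul_self (g1_pm c1 i k n)

lemma g1_succ (i : Fin r) (j : Fin (r - 1)) (k : Fin 4) :
    g1 c1 i k (j.val + 1) = sg (c1 i j k) * g1 c1 i k j.val := by
  unfold g1
  rw [chain_succ]
  rw [dif_pos j.isLt]

lemma e1term (i : Fin r) (j : Fin (r - 1)) (k : Fin 4) :
    c1 i j k * (g1 c1 i k j.val * g1 c1 i k (j.val + 1)) = -|c1 i j k| := by
  rw [g1_succ]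
  calc c1 i j k * (g1 c1 i k j.val * (sg (c1 i j k) * g1 c1 i k j.val))
      = (c1 i j k * sg (c1 i j k)) * (g1 c1 i k j.val * g1 c1 i k j.val) := by ring
    _ = -|c1 i j k| := by rw [g1_sq, mul_one, mul_sg]

/-- family 1: random on layer 0, deterministic on layer 1 -/
noncomputable def fam1 (τ : Fin r × Fin r × Fin 4 → Bool) : ChimeraVertex r → ℝ :=
  fun v => if v.2.2.2 = (0 : Fin 2) then pce (τ (v.1, v.2.1, v.2.2.1))
           else g1 c1 v.1 v.2.2.1 v.2.1.val

lemma fam1_pm (τ) : IsPM (fam1 c1 τ) := by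
  intro v
  unfold fam1
  split_ifs
  · exact pce_pm _
  · exact g1_pm c1 _ _ _

lemma fam1_eval0 (τ) (i : Fin r) (j : Fin r) (k : Fin 4) :
    fam1 c1 τ (i, j, k, 0) = pce (τ (i, j, k)) := by simp [fam1]

lemma fam1_eval1 (τ) (i : Fin r) (j : Fin r) (k : Fin 4) :
    fam1 c1 τ (i, j, k, 1) = g1 c1 i k j.val := by simp [fam1]

lemma fam1_avg :
    ∑ τ : Fin r × Fin r × Fin 4 → Bool, EdgeE c0 c1 c01 (fam1 c1 τ)
      = ∑ _τ : Fin r × Fin r × Fin 4 → Bool, -(∑ i, ∑ j, ∑ k, |c1 i j k|) := by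
  have expand : ∀ τ : Fin r × Fin r × Fin 4 → Bool, EdgeE c0 c1 c01 (fam1 c1 τ) =
      (∑ i : Fin (r - 1), ∑ j : Fin r, ∑ k : Fin 4,
          c0 i j k * (pce (τ (lowRow i, j, k)) * pce (τ (highRow i, j, k))))
      + (∑ i, ∑ j, ∑ k, -|c1 i j k|)
      + (∑ i : Fin r, ∑ j : Fin r, ∑ k0 : Fin 4, ∑ k1 : Fin 4,
          c01 i j k0 k1 * (pce (τ (i, j, k0)) * g1 c1 i k1 j.val)) := by
    intro τ
    unfold EdgeE
    simp only [fam1_eval0, fam1_eval1, lowRow_val, highRow_val, e1term]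
  simp only [expand]
  rw [Finset.sum_add_distrib, Finset.sum_add_distrib]
  have hA : ∑ τ : Fin r × Fin r × Fin 4 → Bool,
      ∑ i : Fin (r - 1), ∑ j : Fin r, ∑ k : Fin 4,
        c0 i j k * (pce (τ (lowRow i, j, k)) * pce (τ (highRow i, j, k))) = 0 := by
    rw [sum_comm_nest3]
    refine Finset.sum_eq_zero fun i _ => Finset.sum_eq_zero fun j _ =>
      Finset.sum_eq_zero fun k _ => ?_
    refine sum_const_mul_pce_two _ ?_
    intro h
    exact low_ne_high i (congrArg (fun p => p.1) h)
  have hC : ∑ τ : Fin r × Fin r × Fin 4 → Bool,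
      ∑ i : Fin r, ∑ j : Fin r, ∑ k0 : Fin 4, ∑ k1 : Fin 4,
        c01 i j k0 k1 * (pce (τ (i, j, k0)) * g1 c1 i k1 j.val) = 0 := by
    rw [sum_comm_nest4]
    refine Finset.sum_eq_zero fun i _ => Finset.sum_eq_zero fun j _ =>
      Finset.sum_eq_zero fun k0 _ => Finset.sum_eq_zero fun k1 _ => ?_
    have h1 : ∀ τ : Fin r × Fin r × Fin 4 → Bool,
        c01 i j k0 k1 * (pce (τ (i, j, k0)) * g1 c1 i k1 j.val)
          = (c01 i j k0 k1 * g1 c1 i k1 j.val) * pce (τ (i, j, k0)) := fun τ => by ring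
    rw [Finset.sum_congr rfl fun τ _ => h1 τ]
    exact sum_const_mul_pce _ _
  rw [hA, hC]
  simp [Finset.sum_neg_distrib]

end Families3

lemma pm_mul {x y : ℝ} (hx : x = 1 ∨ x = -1) (hy : y = 1 ∨ y = -1) :
    x * y = 1 ∨ x * y = -1 := by
  rcases hx with h | h <;> rcases hy with h' | h' <;> simp [h, h']

section Families4

variable {r : ℕ} (c0 : Fin (r - 1) → Fin r → Fin 4 → ℝ)
    (c1 : Fin r → Fin (r - 1) → Fin 4 → ℝ)
    (c01 : Fin r → Fin r → Fin 4 → Fin 4 → ℝ)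

/-- family for the in-cell edges, one for each offset `m` -/
noncomputable def fam01 (m : Fin 4) (τ : Fin r × Fin r × Fin 4 → Bool) :
    ChimeraVertex r → ℝ :=
  fun v => if v.2.2.2 = (0 : Fin 2) then pce (τ (v.1, v.2.1, v.2.2.1))
           else sg (c01 v.1 v.2.1 (v.2.2.1 - m) v.2.2.1) * pce (τ (v.1, v.2.1, v.2.2.1 - m))

lemma fam01_pm (m τ) : IsPM (fam01 c01 m τ) := by
  intro v
  unfold fam01
  split_ifs
  · exact pce_pm _
  · exact pm_mul (sg_pm _) (pce_pm _)

lemma fam01_eval0 (m τ) (i : Fin r) (j : Fin r) (k : Fin 4) :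
    fam01 c01 m τ (i, j, k, 0) = pce (τ (i, j, k)) := by simp [fam01]

lemma fam01_eval1 (m τ) (i : Fin r) (j : Fin r) (k : Fin 4) :
    fam01 c01 m τ (i, j, k, 1)
      = sg (c01 i j (k - m) k) * pce (τ (i, j, k - m)) := by simp [fam01]

lemma fam01_avg (m : Fin 4) :
    ∑ τ : Fin r × Fin r × Fin 4 → Bool, EdgeE c0 c1 c01 (fam01 c01 m τ)
      = ∑ _τ : Fin r × Fin r × Fin 4 → Bool,
          (∑ i : Fin r, ∑ j : Fin r, ∑ k0 : Fin 4, ∑ k1 : Fin 4,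
            if k0 = k1 - m then -|c01 i j k0 k1| else 0) := by
  have expand : ∀ τ : Fin r × Fin r × Fin 4 → Bool, EdgeE c0 c1 c01 (fam01 c01 m τ) =
      (∑ i : Fin (r - 1), ∑ j : Fin r, ∑ k : Fin 4,
          c0 i j k * (pce (τ (lowRow i, j, k)) * pce (τ (highRow i, j, k))))
      + (∑ i : Fin r, ∑ j : Fin (r - 1), ∑ k : Fin 4,
          c1 i j k * ((sg (c01 i (lowRow j) (k - m) k) * pce (τ (i, lowRow j, k - m)))
            * (sg (c01 i (highRow j) (k - m) k) * pce (τ (i, highRow j, k - m)))))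
      + (∑ i : Fin r, ∑ j : Fin r, ∑ k0 : Fin 4, ∑ k1 : Fin 4,
          c01 i j k0 k1 * (pce (τ (i, j, k0))
            * (sg (c01 i j (k1 - m) k1) * pce (τ (i, j, k1 - m))))) := by
    intro τ
    unfold EdgeE
    simp only [fam01_eval0, fam01_eval1]
  simp only [expand]
  rw [Finset.sum_add_distrib, Finset.sum_add_distrib]
  have hA : ∑ τ : Fin r × Fin r × Fin 4 → Bool,
      ∑ i : Fin (r - 1), ∑ j : Fin r, ∑ k : Fin 4,
        c0 i j k * (pce (τ (lowRow i, j, k)) * pce (τ (highRow i, j, k))) = 0 := by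
    rw [sum_comm_nest3]
    refine Finset.sum_eq_zero fun i _ => Finset.sum_eq_zero fun j _ =>
      Finset.sum_eq_zero fun k _ => ?_
    refine sum_const_mul_pce_two _ ?_
    intro h
    exact low_ne_high i (congrArg (fun p => p.1) h)
  have hB : ∑ τ : Fin r × Fin r × Fin 4 → Bool,
      ∑ i : Fin r, ∑ j : Fin (r - 1), ∑ k : Fin 4,
        c1 i j k * ((sg (c01 i (lowRow j) (k - m) k) * pce (τ (i, lowRow j, k - m)))
          * (sg (c01 i (highRow j) (k - m) k) * pce (τ (i, highRow j, k - m)))) = 0 := by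
    rw [sum_comm_nest3]
    refine Finset.sum_eq_zero fun i _ => Finset.sum_eq_zero fun j _ =>
      Finset.sum_eq_zero fun k _ => ?_
    have h1 : ∀ τ : Fin r × Fin r × Fin 4 → Bool,
        c1 i j k * ((sg (c01 i (lowRow j) (k - m) k) * pce (τ (i, lowRow j, k - m)))
          * (sg (c01 i (highRow j) (k - m) k) * pce (τ (i, highRow j, k - m))))
        = (c1 i j k * sg (c01 i (lowRow j) (k - m) k) * sg (c01 i (highRow j) (k - m) k))
            * (pce (τ (i, lowRow j, k - m)) * pce (τ (i, highRow j, k - m))) :=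
      fun τ => by ring
    rw [Finset.sum_congr rfl fun τ _ => h1 τ]
    refine sum_const_mul_pce_two _ ?_
    intro h
    exact low_ne_high j (congrArg (fun p => p.2.1) h)
  have key : ∀ (i : Fin r) (j : Fin r) (k0 : Fin 4) (k1 : Fin 4),
      (∑ τ : Fin r × Fin r × Fin 4 → Bool,
        c01 i j k0 k1 * (pce (τ (i, j, k0))
          * (sg (c01 i j (k1 - m) k1) * pce (τ (i, j, k1 - m)))))
      = ∑ _τ : Fin r × Fin r × Fin 4 → Bool,
          (if k0 = k1 - m then -|c01 i j k0 k1| else 0) := by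
    intro i j k0 k1
    by_cases hk : k0 = k1 - m
    · simp only [if_pos hk]
      rw [← hk]
      refine Finset.sum_congr rfl fun τ _ => ?_
      calc c01 i j k0 k1 * (pce (τ (i, j, k0)) * (sg (c01 i j k0 k1) * pce (τ (i, j, k0))))
          = (c01 i j k0 k1 * sg (c01 i j k0 k1))
              * (pce (τ (i, j, k0)) * pce (τ (i, j, k0))) := by ring
        _ = -|c01 i j k0 k1| := by rw [pm_mul_self (pce_pm _), mul_one, mul_sg]
    · simp only [if_neg hk, Finset.sum_const_zero]
      have h1 : ∀ τ : Fin r × Fin r × Fin 4 → Bool,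
          c01 i j k0 k1 * (pce (τ (i, j, k0))
            * (sg (c01 i j (k1 - m) k1) * pce (τ (i, j, k1 - m))))
          = (c01 i j k0 k1 * sg (c01 i j (k1 - m) k1))
              * (pce (τ (i, j, k0)) * pce (τ (i, j, k1 - m))) := fun τ => by ring
      rw [Finset.sum_congr rfl fun τ _ => h1 τ]
      refine sum_const_mul_pce_two _ ?_
      intro h
      exact hk (congrArg (fun p => p.2.2) h)
  have hC : ∑ τ : Fin r × Fin r × Fin 4 → Bool,
      ∑ i : Fin r, ∑ j : Fin r, ∑ k0 : Fin 4, ∑ k1 : Fin 4,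
        c01 i j k0 k1 * (pce (τ (i, j, k0))
          * (sg (c01 i j (k1 - m) k1) * pce (τ (i, j, k1 - m))))
      = ∑ _τ : Fin r × Fin r × Fin 4 → Bool,
          (∑ i : Fin r, ∑ j : Fin r, ∑ k0 : Fin 4, ∑ k1 : Fin 4,
            if k0 = k1 - m then -|c01 i j k0 k1| else 0) := by
    rw [sum_comm_nest4]
    rw [sum_comm_nest4 (fun (τ : Fin r × Fin r × Fin 4 → Bool) (i : Fin r) (j : Fin r)
      (k0 : Fin 4) (k1 : Fin 4) => if k0 = k1 - m then -|c01 i j k0 k1| else 0)]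
    refine Finset.sum_congr rfl fun i _ => Finset.sum_congr rfl fun j _ =>
      Finset.sum_congr rfl fun k0 _ => Finset.sum_congr rfl fun k1 _ => key i j k0 k1
  rw [hA, hB, hC]
  ring

end Families4

lemma fin4_sum_ite (x : ℝ) (k0 k1 : Fin 4) :
    (∑ m : Fin 4, if k0 = k1 - m then x else 0) = x := by
  have hcond : ∀ m : Fin 4, (k0 = k1 - m) ↔ (m = k1 - k0) := by
    intro m
    constructor
    · rintro rfl; rw [sub_sub_cancel]
    · rintro rfl; rw [sub_sub_cancel]
  simp_rw [hcond]
  simp [Finset.sum_ite_eq']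

/-- with `C = ln(1+√2)/π`, the minimum value `H*` of the Ising Hamiltonian
on the Chimera graph satisfies `((C+2)/C)·H* ≤ -(A_0 + A_1 + A_01)`. -/
theorem stmt7 (r : ℕ) (hr : 1 ≤ r)
    (c0 : Fin (r - 1) → Fin r → Fin 4 → ℝ)
    (c1 : Fin r → Fin (r - 1) → Fin 4 → ℝ)
    (c01 : Fin r → Fin r → Fin 4 → Fin 4 → ℝ)
    (d : ChimeraVertex r → ℝ)
    (Sopt : ChimeraVertex r → ℝ) (hSopt : IsPM Sopt)
    (hmin : ∀ S : ChimeraVertex r → ℝ, IsPM S →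
      IsingH c0 c1 c01 d Sopt ≤ IsingH c0 c1 c01 d S) :
    ((Real.log (1 + Real.sqrt 2) / Real.pi + 2) / (Real.log (1 + Real.sqrt 2) / Real.pi)) *
        IsingH c0 c1 c01 d Sopt ≤
      -((∑ i, ∑ j, ∑ k, |c0 i j k|) + (∑ i, ∑ j, ∑ k, |c1 i j k|)
          + (∑ i, ∑ j, ∑ k0, ∑ k1, |c01 i j k0 k1|)) := by
  set E := IsingH c0 c1 c01 d Sopt with hE
  -- the three averaging bounds
  have h0 : E ≤ -(∑ i, ∑ j, ∑ k, |c0 i j k|) :=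
    min_le_of_family c0 c1 c01 d Sopt hmin (fam0 c0) (fam0_pm c0) _ (fam0_avg c0 c1 c01)
  have h1 : E ≤ -(∑ i, ∑ j, ∑ k, |c1 i j k|) :=
    min_le_of_family c0 c1 c01 d Sopt hmin (fam1 c1) (fam1_pm c1) _ (fam1_avg c0 c1 c01)
  have h01m : ∀ m : Fin 4, E ≤ ∑ i : Fin r, ∑ j : Fin r, ∑ k0 : Fin 4, ∑ k1 : Fin 4,
      (if k0 = k1 - m then -|c01 i j k0 k1| else 0) := fun m =>
    min_le_of_family c0 c1 c01 d Sopt hmin (fam01 c01 m) (fam01_pm c01 m) _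
      (fam01_avg c0 c1 c01 m)
  have hsum : ∑ m : Fin 4, (∑ i : Fin r, ∑ j : Fin r, ∑ k0 : Fin 4, ∑ k1 : Fin 4,
      (if k0 = k1 - m then -|c01 i j k0 k1| else 0))
      = -(∑ i, ∑ j, ∑ k0, ∑ k1, |c01 i j k0 k1|) := by
    rw [sum_comm_nest4 (fun (m : Fin 4) (i : Fin r) (j : Fin r) (k0 : Fin 4) (k1 : Fin 4) =>
      if k0 = k1 - m then -|c01 i j k0 k1| else 0)]
    simp_rw [fin4_sum_ite]
    simp [Finset.sum_neg_distrib]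
  have h01 : 4 * E ≤ -(∑ i, ∑ j, ∑ k0, ∑ k1, |c01 i j k0 k1|) := by
    have hs := Finset.sum_le_sum (fun (m : Fin 4) (_ : m ∈ Finset.univ) => h01m m)
    rw [hsum] at hs
    simpa using hs
  have hA0 : (0:ℝ) ≤ ∑ i, ∑ j, ∑ k, |c0 i j k| := by positivity
  have hE0 : E ≤ 0 := by linarith
  have h6 : 6 * E ≤ -((∑ i, ∑ j, ∑ k, |c0 i j k|) + (∑ i, ∑ j, ∑ k, |c1 i j k|)
      + (∑ i, ∑ j, ∑ k0, ∑ k1, |c01 i j k0 k1|)) := by linarith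
  -- numerics: C = log(1+√2)/π satisfies 0 < C ≤ 1/3, hence (C+2)/C ≥ 7 ≥ 6
  have hπ := Real.pi_gt_three
  have hs2 : Real.sqrt 2 < 1.5 := by
    rw [Real.sqrt_lt' (by norm_num)]
    norm_num
  have hs2' : (0:ℝ) < Real.sqrt 2 := Real.sqrt_pos.mpr (by norm_num)
  have hL0 : 0 < Real.log (1 + Real.sqrt 2) := Real.log_pos (by linarith)
  have hL1 : Real.log (1 + Real.sqrt 2) ≤ 1 := by
    rw [Real.log_le_iff_le_exp (by linarith)]
    have := Real.exp_one_gt_d9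
    linarith
  set C := Real.log (1 + Real.sqrt 2) / Real.pi with hC
  have hC0 : 0 < C := div_pos hL0 (by linarith)
  have hC3 : C ≤ 1 / 3 := by
    rw [hC, div_le_div_iff₀ (by linarith) (by norm_num)]
    linarith
  have hCoef : 6 ≤ (C + 2) / C := by
    rw [le_div_iff₀ hC0]
    linarith
  calc ((C + 2) / C) * E ≤ 6 * E := mul_le_mul_of_nonpos_right hCoef hE0
    _ ≤ _ := h6
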